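/- arXiv:2207.13408 — 2 statements merged into one kernel-verified Lean document; each statement's English description precedes it below -/
import Mathlib

section
/- Let p be a prime, U a finite p-group, and f : M → N a surjective homomorphism of finitely generated projective 𝔽_p[U]-modules. If the induced map on U-invariants f^U : M^U → N^U is injective, then f is an isomorphism. -/
/-- Priddy–Wilkerson comparison, algebraic core: a surjection of finitely generated
projective `𝔽_p[U]`-modules (`U` a finite `p`-group) which is injective on
`U`-invariants is an isomorphism. -/
theorem surjective_injective_on_invariants_is_iso (p : ℕ) [Fact p.Prime]
    (U : Type) [Group U] [Finite U] (hU : IsPGroup p U)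
    (M N : Type) [AddCommGroup M] [AddCommGroup N]
    [Module (MonoidAlgebra (ZMod p) U) M] [Module (MonoidAlgebra (ZMod p) U) N]
    [Module.Finite (MonoidAlgebra (ZMod p) U) M]
    [Module.Finite (MonoidAlgebra (ZMod p) U) N]
    (hM : Module.Projective (MonoidAlgebra (ZMod p) U) M)
    (hN : Module.Projective (MonoidAlgebra (ZMod p) U) N)
    (f : M →ₗ[MonoidAlgebra (ZMod p) U] N)
    (hsurj : Function.Surjective f)
    (hinv : ∀ m m' : M,
      (∀ u : U, MonoidAlgebra.of (ZMod p) U u • m = m) →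
      (∀ u : U, MonoidAlgebra.of (ZMod p) U u • m' = m') →
      f m = f m' → m = m') :
    Function.Bijective f := by
  set R := MonoidAlgebra (ZMod p) U with hR
  refine ⟨?_, hsurj⟩
  haveI : Finite R := by
    have : Finite (U →₀ ZMod p) := Finite.of_injective _ (DFunLike.coe_injective)
    exact Finite.of_equiv _ (MonoidAlgebra.coeffEquiv (R := ZMod p) (M := U)).symm
  haveI : Finite M := Module.finite_of_finite R
  set K := LinearMap.ker f with hKdef
  letI : MulAction U K :=
    { smul := fun u x => ⟨MonoidAlgebra.of (ZMod p) U u • (x : M), K.smul_mem _ x.2⟩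
      one_smul := fun x => Subtype.ext
        (show MonoidAlgebra.of (ZMod p) U 1 • (x : M) = x by rw [map_one, one_smul])
      mul_smul := fun u v x => Subtype.ext
        (show MonoidAlgebra.of (ZMod p) U (u * v) • (x : M) =
            MonoidAlgebra.of (ZMod p) U u • MonoidAlgebra.of (ZMod p) U v • (x : M) by
          rw [map_mul, mul_smul]) }
  letI : Module (ZMod p) K := Module.compHom K (algebraMap (ZMod p) R)
  have hK : ∀ x : K, x = 0 := by
    by_contra h
    push_neg at h
    obtain ⟨x, hx⟩ := h
    haveI : Nontrivial K := ⟨x, 0, hx⟩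
    haveI := Fintype.ofFinite K
    have hdvd : p ∣ Nat.card K := by
      rw [Nat.card_eq_fintype_card, Module.card_eq_pow_finrank (K := ZMod p) (V := K),
        ZMod.card]
      exact dvd_pow_self p (Module.finrank_pos (R := ZMod p) (M := K)).ne'
    have h0 : (0 : K) ∈ MulAction.fixedPoints U K := fun u =>
      Subtype.ext (by show MonoidAlgebra.of (ZMod p) U u • (0 : M) = 0; simp)
    obtain ⟨b, hb, hb0⟩ :=
      hU.exists_fixed_point_of_prime_dvd_card_of_fixed_point (α := K) hdvd h0
    refine hb0 ?_
    have hbfix : ∀ u : U, MonoidAlgebra.of (ZMod p) U u • (b : M) = (b : M) := fun u =>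
      congrArg Subtype.val (hb u)
    have h0fix : ∀ u : U, MonoidAlgebra.of (ZMod p) U u • (0 : M) = (0 : M) := fun u =>
      smul_zero _
    have hfb : f (b : M) = f 0 := by
      rw [map_zero]; exact b.2
    exact (Subtype.ext (hinv (b : M) 0 hbfix h0fix hfb)).symm
  rw [← LinearMap.ker_eq_bot (M := M) (f := f)]
  exact Submodule.eq_bot_iff _ |>.2 fun x hxK => by
    simpa using congrArg Subtype.val (hK ⟨x, hxK⟩)
end

section
/- Let p be a prime and k ≥ 2. The reduced Euler characteristic of the order complex of the poset of proper nontrivial subgroups of (ℤ/p)^k equals (−1)^k · p^(k(k−1)/2). -/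
open Finset

namespace TitsAux

open scoped Classical

variable {L : Type*} [Fintype L] [PartialOrder L] [OrderBot L]

/-- Finsets that are chains contained in the open interval `(⊥, b)`. -/
noncomputable def chainsBelow (b : L) : Finset (Finset L) :=
  univ.filter (fun S => (∀ x ∈ S, ⊥ < x ∧ x < b) ∧ IsChain (· ≤ ·) (S : Set L))

/-- Finsets that are chains contained in the half-open interval `(⊥, b]`. -/
noncomputable def iocChains (b : L) : Finset (Finset L) :=
  univ.filter (fun S => (∀ x ∈ S, ⊥ < x ∧ x ≤ b) ∧ IsChain (· ≤ ·) (S : Set L))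

noncomputable def chainSum (b : L) : ℤ := ∑ S ∈ chainsBelow b, (-1 : ℤ) ^ S.card

noncomputable def mu (b : L) : ℤ := if b = ⊥ then 1 else - chainSum b

lemma neg_one_pow_pred {c : ℕ} (hc : 1 ≤ c) : (-1 : ℤ) ^ (c - 1) = -(-1 : ℤ) ^ c := by
  cases c with
  | zero => omega
  | succ m => simp [pow_succ]

lemma iocChains_sum (b : L) (hb : ⊥ < b) :
    ∑ T ∈ iocChains b, (-1 : ℤ) ^ T.card = 0 := by
  refine Finset.sum_involution
    (fun T _ => if b ∈ T then T.erase b else insert b T) ?_ ?_ ?_ ?_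
  · intro T hT
    by_cases h : b ∈ T
    · simp only [h, if_true, Finset.card_erase_of_mem h]
      have h1 : 1 ≤ T.card := Finset.card_pos.mpr ⟨b, h⟩
      rw [neg_one_pow_pred h1]; ring
    · simp only [h, if_false, Finset.card_insert_of_notMem h, pow_succ]
      ring
  · intro T hT _
    by_cases h : b ∈ T
    · simp only [h, if_true]
      intro hcon
      exact (Finset.erase_eq_self.mp hcon) h
    · simp only [h, if_false]
      intro hcon
      exact h (Finset.insert_eq_self.mp hcon)
  · intro T hT
    simp only [iocChains, mem_filter, mem_univ, true_and] at hT ⊢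
    obtain ⟨hmem, hchain⟩ := hT
    by_cases h : b ∈ T
    · simp only [h, if_true]
      refine ⟨fun x hx => hmem x (Finset.mem_of_mem_erase hx), ?_⟩
      exact hchain.mono (by simpa using Finset.erase_subset b T)
    · simp only [h, if_false]
      constructor
      · intro x hx
        rcases Finset.mem_insert.mp hx with rfl | hx'
        · exact ⟨hb, le_refl _⟩
        · exact hmem x hx'
      · rw [Finset.coe_insert]
        exact hchain.insert (fun x hx _ => Or.inr ((hmem x hx).2))
  · intro T hT
    by_cases h : b ∈ T
    · simp [h, Finset.notMem_erase, Finset.insert_erase h]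
    · simp [h, Finset.erase_insert h]

lemma erase_empty_sum (b : L) (hb : ⊥ < b) :
    ∑ T ∈ (iocChains b).erase ∅, (-1 : ℤ) ^ (T.card - 1) = 1 := by
  have h0 : (∅ : Finset L) ∈ iocChains b := by
    simp [iocChains]
  have key := Finset.add_sum_erase _ (fun T => (-1 : ℤ) ^ T.card) h0
  rw [iocChains_sum b hb] at key
  simp only [Finset.card_empty, pow_zero] at key
  have h2 : ∑ T ∈ (iocChains b).erase ∅, (-1 : ℤ) ^ T.card = -1 := by linarith
  have h3 : ∀ T ∈ (iocChains b).erase ∅, (-1 : ℤ) ^ (T.card - 1) = -((-1 : ℤ) ^ T.card) := by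
    intro T hT
    have hne : T ≠ ∅ := Finset.ne_of_mem_erase hT
    have : 1 ≤ T.card := Finset.card_pos.mpr (Finset.nonempty_iff_ne_empty.mpr hne)
    rw [neg_one_pow_pred this]
  rw [Finset.sum_congr rfl h3, Finset.sum_neg_distrib, h2]
  ring

lemma exists_greatest {T : Finset L} (hne : T.Nonempty) (hc : IsChain (· ≤ ·) (T : Set L)) :
    ∃ m ∈ T, ∀ x ∈ T, x ≤ m := by
  obtain ⟨m, hm, hmax⟩ := T.exists_maximal hne
  refine ⟨m, hm, fun x hx => ?_⟩
  rcases eq_or_ne x m with rfl | hxm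
  · exact le_refl _
  rcases hc hx hm hxm with h | h
  · exact h
  · exact hmax hx h

/-- A greatest element of a finset (junk value if none). -/
noncomputable def gMax (T : Finset L) : L :=
  if h : ∃ m ∈ T, ∀ x ∈ T, x ≤ m then h.choose else ⊥

lemma gMax_spec {T : Finset L} (h : ∃ m ∈ T, ∀ x ∈ T, x ≤ m) :
    gMax T ∈ T ∧ ∀ x ∈ T, x ≤ gMax T := by
  rw [gMax, dif_pos h]
  exact h.choose_spec

lemma sum_chainSum (b : L) (hb : ⊥ < b) :
    ∑ z ∈ univ.filter (fun z => ⊥ < z ∧ z ≤ b), chainSum z = 1 := by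
  rw [show ∑ z ∈ univ.filter (fun z => ⊥ < z ∧ z ≤ b), chainSum z
      = ∑ z ∈ univ.filter (fun z => ⊥ < z ∧ z ≤ b), ∑ S ∈ chainsBelow z, (-1 : ℤ) ^ S.card
      from rfl]
  rw [Finset.sum_sigma' (univ.filter (fun z => ⊥ < z ∧ z ≤ b)) (fun z => chainsBelow z)
    (fun _ S => (-1 : ℤ) ^ S.card)]
  have hbij : ∑ x ∈ (univ.filter (fun z : L => ⊥ < z ∧ z ≤ b)).sigma
        (fun z => chainsBelow z), (-1 : ℤ) ^ x.snd.card
      = ∑ T ∈ (iocChains b).erase ∅, (-1 : ℤ) ^ (T.card - 1) := by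
    refine Finset.sum_bij' (fun a _ => insert a.1 a.2)
      (fun T _ => ⟨gMax T, T.erase (gMax T)⟩) ?_ ?_ ?_ ?_ ?_
    · -- hi : forward lands in target
      rintro ⟨z, S⟩ ha
      simp only [Finset.mem_sigma, mem_filter, mem_univ, true_and, chainsBelow] at ha
      obtain ⟨⟨hz1, hz2⟩, hS1, hS2⟩ := ha
      rw [Finset.mem_erase]
      constructor
      · exact (Finset.insert_nonempty _ _).ne_empty
      · simp only [iocChains, mem_filter, mem_univ, true_and]
        constructor
        · intro x hx
          rcases Finset.mem_insert.mp hx with rfl | hx'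
          · exact ⟨hz1, hz2⟩
          · exact ⟨(hS1 x hx').1, le_trans (le_of_lt (hS1 x hx').2) hz2⟩
        · rw [Finset.coe_insert]
          exact hS2.insert (fun x hx _ => Or.inr (le_of_lt (hS1 x hx).2))
    · -- hj : backward lands in source
      intro T hT
      rw [Finset.mem_erase] at hT
      obtain ⟨hne, hT'⟩ := hT
      simp only [iocChains, mem_filter, mem_univ, true_and] at hT'
      obtain ⟨hmem, hchain⟩ := hT'
      have hspec := gMax_spec (exists_greatest (Finset.nonempty_iff_ne_empty.mpr hne) hchain)
      simp only [Finset.mem_sigma, mem_filter, mem_univ, true_and, chainsBelow]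
      refine ⟨⟨(hmem _ hspec.1).1, (hmem _ hspec.1).2⟩, ?_, ?_⟩
      · intro x hx
        have hx' := Finset.mem_of_mem_erase hx
        refine ⟨(hmem x hx').1, lt_of_le_of_ne (hspec.2 x hx') (Finset.ne_of_mem_erase hx)⟩
      · exact hchain.mono (by simpa using Finset.erase_subset _ T)
    · -- left inverse
      rintro ⟨z, S⟩ ha
      simp only [Finset.mem_sigma, mem_filter, mem_univ, true_and, chainsBelow] at ha
      obtain ⟨⟨hz1, hz2⟩, hS1, hS2⟩ := ha
      have hzS : z ∉ S := fun h => lt_irrefl z (hS1 z h).2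
      have hgr : ∃ m ∈ insert z S, ∀ x ∈ insert z S, x ≤ m := by
        refine ⟨z, Finset.mem_insert_self _ _, fun x hx => ?_⟩
        rcases Finset.mem_insert.mp hx with rfl | hx'
        · exact le_refl _
        · exact le_of_lt (hS1 x hx').2
      have hspec := gMax_spec hgr
      have hgz : gMax (insert z S) = z := by
        rcases Finset.mem_insert.mp hspec.1 with h | h
        · exact h
        · exact absurd (hspec.2 z (Finset.mem_insert_self _ _))
            (not_le_of_gt (hS1 _ h).2)
      simp only [hgz, Finset.erase_insert hzS]
    · -- right inverse
      intro T hT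
      rw [Finset.mem_erase] at hT
      obtain ⟨hne, hT'⟩ := hT
      simp only [iocChains, mem_filter, mem_univ, true_and] at hT'
      have hspec := gMax_spec (exists_greatest (Finset.nonempty_iff_ne_empty.mpr hne) hT'.2)
      exact Finset.insert_erase hspec.1
    · -- values agree
      rintro ⟨z, S⟩ ha
      simp only [Finset.mem_sigma, mem_filter, mem_univ, true_and, chainsBelow] at ha
      obtain ⟨⟨hz1, hz2⟩, hS1, hS2⟩ := ha
      have hzS : z ∉ S := fun h => lt_irrefl z (hS1 z h).2
      rw [Finset.card_insert_of_notMem hzS]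
      simp
  rw [hbij]
  exact erase_empty_sum b hb

lemma mu_sum (b : L) (hb : ⊥ < b) :
    ∑ z ∈ univ.filter (fun z => z ≤ b), mu z = 0 := by
  have hsplit : univ.filter (fun z : L => z ≤ b)
      = insert ⊥ (univ.filter (fun z => ⊥ < z ∧ z ≤ b)) := by
    ext z
    simp only [mem_filter, mem_univ, true_and, Finset.mem_insert]
    constructor
    · intro h
      rcases eq_or_ne z ⊥ with rfl | hz
      · exact Or.inl rfl
      · exact Or.inr ⟨bot_lt_iff_ne_bot.mpr hz, h⟩
    · rintro (rfl | ⟨_, h⟩)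
      · exact bot_le
      · exact h
  rw [hsplit, Finset.sum_insert (by simp)]
  have h1 : ∀ z ∈ univ.filter (fun z : L => ⊥ < z ∧ z ≤ b), mu z = -chainSum z := by
    intro z hz
    simp only [mem_filter, mem_univ, true_and] at hz
    rw [mu, if_neg (bot_lt_iff_ne_bot.mp hz.1)]
  rw [Finset.sum_congr rfl h1, Finset.sum_neg_distrib, sum_chainSum b hb]
  simp [mu]


section Subspace

open Module Submodule

variable (p : ℕ) [Fact p.Prime]

/-- The target value: the Möbius number of a `d`-dimensional `𝔽_p`-space. -/
noncomputable def tgt (d : ℕ) : ℤ := (-1 : ℤ) ^ d * (p : ℤ) ^ (d.choose 2)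

lemma tgt_step {m d : ℕ} (hdm : d ≤ m) :
    tgt p d + (p ^ (m - d)) • tgt p (d + 1) = tgt p d * (1 - (p : ℤ) ^ m) := by
  have hchoose : (d + 1).choose 2 = d.choose 2 + d := by
    simp [Nat.choose_succ_succ, Nat.choose_one_right, Nat.add_comm]
  rw [nsmul_eq_mul, tgt, tgt, hchoose]
  push_cast
  rw [show ((p : ℤ) ^ (m - d)) * ((-1 : ℤ) ^ (d + 1) * (p : ℤ) ^ (d.choose 2 + d))
      = (-1 : ℤ) ^ (d + 1) * (p : ℤ) ^ ((m - d) + (d.choose 2 + d)) by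
        rw [pow_add]; ring]
  rw [show (m - d) + (d.choose 2 + d) = d.choose 2 + m by omega]
  rw [pow_succ, pow_add]
  ring

variable {W : Type} [AddCommGroup W] [Module (ZMod p) W] [Finite W]

local instance : Finite (Submodule (ZMod p) W) :=
  Finite.of_injective (fun s => (s : Set W)) SetLike.coe_injective

noncomputable local instance : Fintype (Submodule (ZMod p) W) := Fintype.ofFinite _

variable {p}

section Fiber

variable (φ : W →ₗ[ZMod p] ZMod p) (v : W) (hv : φ v = 1)
  (W' : Submodule (ZMod p) W) (hW' : W' ≤ LinearMap.ker φ)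

/-- Parametrization of the subspaces `z` with `z ⊓ ker φ = W'`, `z ≠ W'`. -/
noncomputable def psi (h : LinearMap.ker φ) : Submodule (ZMod p) W :=
  W' ⊔ span (ZMod p) {v + (h : W)}

lemma psi_mem_self (h : LinearMap.ker φ) : v + (h : W) ∈ psi φ v W' h :=
  mem_sup_right (mem_span_singleton_self _)

include hv hW'

lemma psi_inf (h : LinearMap.ker φ) : psi φ v W' h ⊓ LinearMap.ker φ = W' := by
  refine le_antisymm ?_ (le_inf le_sup_left hW')
  intro x hx
  have hx1 : x ∈ psi φ v W' h := hx.1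
  have hx2 : x ∈ LinearMap.ker φ := hx.2
  rw [psi] at hx1
  obtain ⟨w, hw, s, hs, rfl⟩ := Submodule.mem_sup.mp hx1
  obtain ⟨c, rfl⟩ := mem_span_singleton.mp hs
  have hφw : φ w = 0 := hW' hw
  have hφh : φ (h : W) = 0 := h.2
  have hφx : φ (w + c • (v + (h : W))) = c := by
    rw [map_add, map_smul, map_add, hv, hφh, hφw, smul_eq_mul]; ring
  rw [LinearMap.mem_ker, hφx] at hx2
  subst hx2
  simpa using hw

lemma psi_ne (h : LinearMap.ker φ) : psi φ v W' h ≠ W' := by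
  intro hcon
  have h1 : v + (h : W) ∈ W' := hcon ▸ psi_mem_self φ v W' h
  have h2 : φ (v + (h : W)) = 0 := hW' h1
  have hφh : φ (h : W) = 0 := h.2
  rw [map_add, hv, hφh] at h2
  simpa using h2

omit hv hW' in
lemma psi_le {h₁ h₂ : LinearMap.ker φ} (hd : (h₁ : W) - (h₂ : W) ∈ W') :
    psi φ v W' h₁ ≤ psi φ v W' h₂ := by
  rw [psi, sup_le_iff]
  refine ⟨le_sup_left, span_le.mpr ?_⟩
  intro x hx
  rcases Set.mem_singleton_iff.mp hx with rfl
  have hrw : v + (h₁ : W) = ((h₁ : W) - (h₂ : W)) + (v + (h₂ : W)) := by abel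
  rw [SetLike.mem_coe, hrw]
  exact add_mem (mem_sup_left hd) (psi_mem_self φ v W' h₂)

lemma psi_eq_iff (h₁ h₂ : LinearMap.ker φ) :
    psi φ v W' h₁ = psi φ v W' h₂ ↔ (h₁ : W) - (h₂ : W) ∈ W' := by
  constructor
  · intro heq
    have h1 : v + (h₁ : W) ∈ psi φ v W' h₂ := heq ▸ psi_mem_self φ v W' h₁
    rw [psi] at h1
    obtain ⟨w, hw, s, hs, hx⟩ := Submodule.mem_sup.mp h1
    obtain ⟨c, rfl⟩ := mem_span_singleton.mp hs
    have hφ : φ (v + (h₁ : W)) = 1 := by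
      rw [map_add, hv, h₁.2]; ring
    have hφ2 : φ (w + c • (v + (h₂ : W))) = c := by
      have hφw : φ w = 0 := hW' hw
      rw [map_add, map_smul, map_add, hv, h₂.2, hφw, smul_eq_mul]; ring
    rw [hx, hφ] at hφ2
    rw [← hφ2, one_smul] at hx
    have hw' : (h₁ : W) - (h₂ : W) = w := by
      have h5 : w = v + (h₁ : W) - (v + (h₂ : W)) := (eq_sub_of_add_eq hx)
      rw [h5]; abel
    rw [hw']; exact hw
  · intro hd
    refine le_antisymm (psi_le φ v W' hd) (psi_le φ v W' ?_)
    simpa using W'.neg_mem hd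

lemma psi_surj (z : Submodule (ZMod p) W) (hz : z ⊓ LinearMap.ker φ = W') (hzne : z ≠ W') :
    ∃ h : LinearMap.ker φ, psi φ v W' h = z := by
  have hWz : W' ≤ z := hz ▸ inf_le_left
  have : ∃ u ∈ z, φ u ≠ 0 := by
    by_contra hcon
    push_neg at hcon
    apply hzne
    rw [← hz]
    refine le_antisymm (le_inf le_rfl ?_) inf_le_left
    intro x hx
    exact LinearMap.mem_ker.mpr (hcon x hx)
  obtain ⟨u, hu, hφu⟩ := this
  set u' : W := (φ u)⁻¹ • u with hu'def
  have hu'z : u' ∈ z := z.smul_mem _ hu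
  have hφu' : φ u' = 1 := by
    rw [hu'def, map_smul, smul_eq_mul, inv_mul_cancel₀ hφu]
  have hker : u' - v ∈ LinearMap.ker φ := by
    rw [LinearMap.mem_ker, map_sub, hφu', hv, sub_self]
  refine ⟨⟨u' - v, hker⟩, ?_⟩
  have hvh : v + ((⟨u' - v, hker⟩ : LinearMap.ker φ) : W) = u' := by
    simp
  rw [psi, hvh]
  refine le_antisymm (sup_le hWz (span_le.mpr ?_)) ?_
  · intro x hx
    rcases Set.mem_singleton_iff.mp hx with rfl
    exact hu'z
  · intro x hx
    have hmem : x - (φ x) • u' ∈ z ⊓ LinearMap.ker φ := by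
      refine ⟨z.sub_mem hx (z.smul_mem _ hu'z), ?_⟩
      show x - (φ x) • u' ∈ LinearMap.ker φ
      rw [LinearMap.mem_ker, map_sub, map_smul, hφu', smul_eq_mul, mul_one, sub_self]
    rw [hz] at hmem
    have hxeq : x = (x - (φ x) • u') + (φ x) • u' := by abel
    rw [hxeq]
    exact add_mem (mem_sup_left hmem) (mem_sup_right (smul_mem _ _ (mem_span_singleton_self _)))

lemma psi_finrank (h : LinearMap.ker φ) :
    finrank (ZMod p) (psi φ v W' h) = finrank (ZMod p) W' + 1 := by
  have : Module.Finite (ZMod p) W := Module.Finite.of_finite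
  have hu : φ (v + (h : W)) = 1 := by rw [map_add, hv, h.2]; ring
  have hune : v + (h : W) ≠ 0 := by
    intro hcon; rw [hcon, map_zero] at hu; simpa using hu.symm
  have hinf : W' ⊓ span (ZMod p) {v + (h : W)} = ⊥ := by
    rw [eq_bot_iff]
    intro x hx
    have hx1 : x ∈ W' := hx.1
    have hx2 : x ∈ span (ZMod p) {v + (h : W)} := hx.2
    obtain ⟨c, rfl⟩ := mem_span_singleton.mp hx2
    have hφc : φ (c • (v + (h : W))) = c := by
      rw [map_smul, smul_eq_mul, hu, mul_one]
    have hc : c = 0 := by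
      have h0 : φ (c • (v + (h : W))) = 0 := hW' hx1
      rw [hφc] at h0; exact h0
    simp [hc]
  have hkey := Submodule.finrank_sup_add_finrank_inf_eq W' (span (ZMod p) {v + (h : W)})
  rw [hinf, finrank_bot, finrank_span_singleton hune] at hkey
  rw [psi]
  omega

/-- The fiber over `W'` is in bijection with `ker φ ⧸ W'`. -/
lemma fiber_card :
    Nat.card {z : Submodule (ZMod p) W // z ⊓ LinearMap.ker φ = W' ∧ z ≠ W'}
      = Nat.card ((LinearMap.ker φ) ⧸ (W'.comap (LinearMap.ker φ).subtype)) := by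
  set N := W'.comap (LinearMap.ker φ).subtype with hN
  have hresp : ∀ a b : LinearMap.ker φ, a - b ∈ N →
      (⟨psi φ v W' a, psi_inf φ v hv W' hW' a, psi_ne φ v hv W' hW' a⟩ :
        {z : Submodule (ZMod p) W // z ⊓ LinearMap.ker φ = W' ∧ z ≠ W'})
      = ⟨psi φ v W' b, psi_inf φ v hv W' hW' b, psi_ne φ v hv W' hW' b⟩ := by
    intro a b hab
    rw [hN, Submodule.mem_comap] at hab
    exact Subtype.ext ((psi_eq_iff φ v hv W' hW' a b).mpr (by simpa using hab))
  set F : ((LinearMap.ker φ) ⧸ N) →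
      {z : Submodule (ZMod p) W // z ⊓ LinearMap.ker φ = W' ∧ z ≠ W'} :=
    fun q => Quotient.liftOn' q
      (fun h => ⟨psi φ v W' h, psi_inf φ v hv W' hW' h, psi_ne φ v hv W' hW' h⟩)
      (fun a b hab => hresp a b (N.quotientRel_def.mp hab)) with hF
  have hFmk : ∀ h : LinearMap.ker φ,
      F (Submodule.Quotient.mk h) = ⟨psi φ v W' h, psi_inf φ v hv W' hW' h,
        psi_ne φ v hv W' hW' h⟩ := fun h => rfl
  refine (Nat.card_congr (Equiv.ofBijective F ⟨?_, ?_⟩)).symm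
  · intro q1 q2 hq
    induction q1 using Quotient.inductionOn' with
    | h a =>
    induction q2 using Quotient.inductionOn' with
    | h b =>
    have ha : (Quotient.mk'' a : (LinearMap.ker φ) ⧸ N) = Submodule.Quotient.mk a :=
      Submodule.Quotient.mk''_eq_mk a
    have hb : (Quotient.mk'' b : (LinearMap.ker φ) ⧸ N) = Submodule.Quotient.mk b :=
      Submodule.Quotient.mk''_eq_mk b
    rw [ha, hb] at hq ⊢
    rw [hFmk, hFmk] at hq
    have hpsi : psi φ v W' a = psi φ v W' b := congrArg Subtype.val hq
    have hmem : (a : W) - (b : W) ∈ W' := (psi_eq_iff φ v hv W' hW' a b).mp hpsi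
    rw [Submodule.Quotient.eq]
    show a - b ∈ N
    rw [hN, Submodule.mem_comap]
    simpa using hmem
  · rintro ⟨z, hz1, hz2⟩
    obtain ⟨h, hh⟩ := psi_surj φ v hv W' hW' z hz1 hz2
    exact ⟨Submodule.Quotient.mk h, by rw [hFmk]; exact Subtype.ext hh⟩

end Fiber

open scoped Classical in
/-- The alternating sum of Möbius numbers over all subspaces of a nonzero
finite `ZMod p`-module vanishes. -/
lemma sum_tgt {p : ℕ} [Fact p.Prime] : ∀ n : ℕ, 1 ≤ n →
    ∀ (W : Type) [AddCommGroup W] [Module (ZMod p) W]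
    [Finite W], finrank (ZMod p) W = n →
    ∑ z : Submodule (ZMod p) W, tgt p (finrank (ZMod p) z) = 0 := by
  intro n
  induction n with
  | zero => omega
  | succ m ih =>
    intro _ W _ _ _ hW
    have hfd : Module.Finite (ZMod p) W := Module.Finite.of_finite
    have hpos : 0 < finrank (ZMod p) W := by omega
    let bas := Module.finBasis (ZMod p) W
    let i0 : Fin (finrank (ZMod p) W) := ⟨0, hpos⟩
    set φ : W →ₗ[ZMod p] ZMod p := bas.coord i0 with hφdef
    set v : W := bas i0 with hvdef
    have hv : φ v = 1 := by
      rw [hφdef, hvdef, Basis.coord_apply, Basis.repr_self, Finsupp.single_eq_same]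
    have hHrank : finrank (ZMod p) (LinearMap.ker φ) = m := by
      have h1 := LinearMap.finrank_range_add_finrank_ker φ
      have hsurj : LinearMap.range φ = ⊤ := by
        rw [LinearMap.range_eq_top]
        intro c
        exact ⟨c • v, by rw [map_smul, hv, smul_eq_mul, mul_one]⟩
      rw [hsurj, finrank_top, Module.finrank_self, hW] at h1
      omega
    rw [← Finset.sum_fiberwise_of_maps_to
      (g := fun z : Submodule (ZMod p) W => z ⊓ LinearMap.ker φ)
      (t := univ.filter (fun W' => W' ≤ LinearMap.ker φ))
      (fun z _ => mem_filter.mpr ⟨mem_univ _, inf_le_right⟩)]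
    have hfiber : ∀ W' ∈ univ.filter
        (fun W' : Submodule (ZMod p) W => W' ≤ LinearMap.ker φ),
        ∑ z ∈ univ.filter (fun z : Submodule (ZMod p) W => z ⊓ LinearMap.ker φ = W'),
          tgt p (finrank (ZMod p) z)
          = tgt p (finrank (ZMod p) W') * (1 - (p : ℤ) ^ m) := by
      intro W' hW'
      rw [mem_filter] at hW'
      have hW'le : W' ≤ LinearMap.ker φ := hW'.2
      set d := finrank (ZMod p) W' with hd
      have hsplit : univ.filter (fun z : Submodule (ZMod p) W => z ⊓ LinearMap.ker φ = W')
          = insert W' (univ.filter (fun z => z ⊓ LinearMap.ker φ = W' ∧ z ≠ W')) := by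
        ext z
        simp only [mem_filter, mem_univ, true_and, Finset.mem_insert]
        constructor
        · intro h
          rcases eq_or_ne z W' with rfl | hne
          · exact Or.inl rfl
          · exact Or.inr ⟨h, hne⟩
        · rintro (rfl | ⟨h, _⟩)
          · exact inf_eq_left.mpr hW'le
          · exact h
      rw [hsplit, Finset.sum_insert (by simp)]
      have hdim : ∀ z ∈ univ.filter
          (fun z : Submodule (ZMod p) W => z ⊓ LinearMap.ker φ = W' ∧ z ≠ W'),
          finrank (ZMod p) z = d + 1 := by
        intro z hz
        rw [mem_filter] at hz
        obtain ⟨h1, h2⟩ := hz.2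
        obtain ⟨h, rfl⟩ := psi_surj φ v hv W' hW'le z h1 h2
        exact psi_finrank φ v hv W' hW'le h
      rw [Finset.sum_congr rfl (fun z hz => by rw [hdim z hz])]
      rw [Finset.sum_const]
      -- dimension bookkeeping
      have hcomap : finrank (ZMod p) (W'.comap (LinearMap.ker φ).subtype) = d :=
        (Submodule.comapSubtypeEquivOfLe hW'le).finrank_eq
      have hquot := Submodule.finrank_quotient_add_finrank
        (W'.comap (LinearMap.ker φ).subtype)
      rw [hcomap, hHrank] at hquot
      have hdm : d ≤ m := by omega
      -- cardinality of the fiber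
      have hcard : (univ.filter
          (fun z : Submodule (ZMod p) W => z ⊓ LinearMap.ker φ = W' ∧ z ≠ W')).card
          = p ^ (m - d) := by
        have h1 : (univ.filter
            (fun z : Submodule (ZMod p) W => z ⊓ LinearMap.ker φ = W' ∧ z ≠ W')).card
            = Nat.card {z : Submodule (ZMod p) W // z ⊓ LinearMap.ker φ = W' ∧ z ≠ W'} := by
          rw [Nat.card_eq_fintype_card, Fintype.card_subtype]
        rw [h1, fiber_card φ v hv W' hW'le]
        letI : Finite ((LinearMap.ker φ) ⧸ (W'.comap (LinearMap.ker φ).subtype)) :=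
          Finite.of_surjective _ (Submodule.Quotient.mk_surjective _)
        letI : Fintype ((LinearMap.ker φ) ⧸ (W'.comap (LinearMap.ker φ).subtype)) :=
          Fintype.ofFinite _
        letI : Fintype (ZMod p) := ZMod.fintype p
        rw [Nat.card_eq_fintype_card]
        rw [card_eq_pow_finrank (K := ZMod p)
          (V := (LinearMap.ker φ) ⧸ (W'.comap (LinearMap.ker φ).subtype)), ZMod.card]
        have hq : finrank (ZMod p)
            ((LinearMap.ker φ) ⧸ (W'.comap (LinearMap.ker φ).subtype)) = m - d := by
          omega
        rw [hq]
      rw [hcard]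
      exact tgt_step p hdm
    rw [Finset.sum_congr rfl hfiber, ← Finset.sum_mul]
    rcases Nat.eq_zero_or_pos m with rfl | hm
    · simp
    · have hinner : ∑ W' ∈ univ.filter
          (fun W' : Submodule (ZMod p) W => W' ≤ LinearMap.ker φ),
          tgt p (finrank (ZMod p) W') = 0 := by
        rw [Finset.sum_subtype (p := fun W' : Submodule (ZMod p) W => W' ≤ LinearMap.ker φ)
          _ (by simp) (fun W' => tgt p (finrank (ZMod p) W'))]
        rw [← Equiv.sum_comp (Submodule.MapSubtype.orderIso (LinearMap.ker φ)).toEquiv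
          (fun w : {W'' : Submodule (ZMod p) W // W'' ≤ LinearMap.ker φ} =>
            tgt p (finrank (ZMod p) w.val))]
        have hval : ∀ z : Submodule (ZMod p) (LinearMap.ker φ),
            tgt p (finrank (ZMod p)
              (((Submodule.MapSubtype.orderIso (LinearMap.ker φ)).toEquiv z) :
                {W'' : Submodule (ZMod p) W // W'' ≤ LinearMap.ker φ}).val)
              = tgt p (finrank (ZMod p) z) := by
          intro z
          congr 1
          exact Submodule.finrank_map_subtype_eq (LinearMap.ker φ) z
        rw [Finset.sum_congr rfl (fun z _ => hval z)]
        exact ih hm (LinearMap.ker φ) hHrank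
      rw [hinner, zero_mul]

end Subspace


section Mu

open Module Submodule
open scoped Classical

variable {p : ℕ} [Fact p.Prime] {W : Type} [AddCommGroup W] [Module (ZMod p) W] [Finite W]

noncomputable instance inst_s15 : Fintype (Submodule (ZMod p) W) :=
  letI : Finite (Submodule (ZMod p) W) :=
    Finite.of_injective (fun s => (s : Set W)) SetLike.coe_injective
  Fintype.ofFinite _

lemma tgt_sum_le (b : Submodule (ZMod p) W) (hb : b ≠ ⊥) :
    ∑ z ∈ univ.filter (fun z : Submodule (ZMod p) W => z ≤ b),
      tgt p (finrank (ZMod p) z) = 0 := by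
  have hfd : Module.Finite (ZMod p) W := Module.Finite.of_finite
  rw [Finset.sum_subtype (p := fun z : Submodule (ZMod p) W => z ≤ b) _ (by simp)
    (fun z => tgt p (finrank (ZMod p) z))]
  rw [← Equiv.sum_comp (Submodule.MapSubtype.orderIso b).toEquiv
    (fun w : {z : Submodule (ZMod p) W // z ≤ b} => tgt p (finrank (ZMod p) w.val))]
  have hval : ∀ z : Submodule (ZMod p) b,
      tgt p (finrank (ZMod p)
        (((Submodule.MapSubtype.orderIso b).toEquiv z) :
          {z : Submodule (ZMod p) W // z ≤ b}).val)
        = tgt p (finrank (ZMod p) z) := by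
    intro z
    congr 1
    exact Submodule.finrank_map_subtype_eq b z
  rw [Finset.sum_congr rfl (fun z _ => hval z)]
  have hn : 1 ≤ finrank (ZMod p) b := by
    rcases Nat.eq_zero_or_pos (finrank (ZMod p) b) with h0 | h1
    · exact absurd (Submodule.finrank_eq_zero.mp h0) hb
    · exact h1
  exact sum_tgt (finrank (ZMod p) b) hn b rfl

lemma mu_eq_tgt (b : Submodule (ZMod p) W) : mu b = tgt p (finrank (ZMod p) b) := by
  induction b using WellFoundedLT.induction with
  | _ b IH =>
  rcases eq_or_ne b ⊥ with rfl | hb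
  · rw [mu, if_pos rfl, finrank_bot, tgt]
    simp
  · have hblt : (⊥ : Submodule (ZMod p) W) < b := bot_lt_iff_ne_bot.mpr hb
    have h1 := mu_sum b hblt
    have hsplitb : univ.filter (fun z : Submodule (ZMod p) W => z ≤ b)
        = insert b (univ.filter (fun z => z < b)) := by
      ext z
      simp only [mem_filter, mem_univ, true_and, Finset.mem_insert]
      constructor
      · intro h
        rcases lt_or_eq_of_le h with h' | h'
        · exact Or.inr h'
        · exact Or.inl h'
      · rintro (rfl | h)
        · exact le_refl _
        · exact le_of_lt h
    have hbnot : b ∉ univ.filter (fun z : Submodule (ZMod p) W => z < b) := by simp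
    rw [hsplitb, Finset.sum_insert hbnot] at h1
    have h2 := tgt_sum_le b hb
    rw [hsplitb, Finset.sum_insert hbnot] at h2
    rw [Finset.sum_congr rfl (fun z hz => IH z (mem_filter.mp hz).2)] at h1
    linarith

end Mu

end TitsAux

open TitsAux Finset Module in
/-- The reduced Euler characteristic of the order complex of the poset of proper
nontrivial subgroups of `(ℤ/p)^k` (the rank-`k` Tits building) equals
`(-1)^k * p^(k(k-1)/2)`.  The simplices of the order complex are the nonempty finite
chains in the poset, an `n`-simplex being a chain with `n+1` elements. -/
theorem tits_building_reduced_euler_char (p : ℕ) (hp : p.Prime) (k : ℕ) (hk : 2 ≤ k) :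
    (∑ᶠ (S : Finset {H : AddSubgroup (Fin k → ZMod p) // H ≠ ⊥ ∧ H ≠ ⊤})
        (_ : S.Nonempty ∧ IsChain (· ≤ ·)
          (S : Set {H : AddSubgroup (Fin k → ZMod p) // H ≠ ⊥ ∧ H ≠ ⊤})),
        (-1 : ℤ) ^ (S.card - 1)) - 1
      = (-1 : ℤ) ^ k * (p : ℤ) ^ (k * (k - 1) / 2) := by
  classical
  haveI : Fact p.Prime := ⟨hp⟩
  have hkpos : 0 < k := by omega
  haveI : Nonempty (Fin k) := ⟨⟨0, hkpos⟩⟩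
  haveI : Finite (AddSubgroup (Fin k → ZMod p)) :=
    Finite.of_injective (fun s => (s : Set (Fin k → ZMod p))) SetLike.coe_injective
  letI : Fintype (AddSubgroup (Fin k → ZMod p)) := Fintype.ofFinite _
  letI : Fintype {H : AddSubgroup (Fin k → ZMod p) // H ≠ ⊥ ∧ H ≠ ⊤} := Fintype.ofFinite _
  set e : AddSubgroup (Fin k → ZMod p) ≃o Submodule (ZMod p) (Fin k → ZMod p) :=
    AddSubgroup.toZModSubmodule p with he
  -- Step 1 : rewrite the finsum as a finset sum
  have hfin : (∑ᶠ (S : Finset {H : AddSubgroup (Fin k → ZMod p) // H ≠ ⊥ ∧ H ≠ ⊤})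
        (_ : S.Nonempty ∧ IsChain (· ≤ ·)
          (S : Set {H : AddSubgroup (Fin k → ZMod p) // H ≠ ⊥ ∧ H ≠ ⊤})),
        (-1 : ℤ) ^ (S.card - 1))
      = ∑ S ∈ univ.filter (fun S : Finset {H : AddSubgroup (Fin k → ZMod p) // H ≠ ⊥ ∧ H ≠ ⊤}
          => S.Nonempty ∧ IsChain (· ≤ ·)
            (S : Set {H : AddSubgroup (Fin k → ZMod p) // H ≠ ⊥ ∧ H ≠ ⊤})),
          (-1 : ℤ) ^ (S.card - 1) := by
    rw [Finset.sum_filter]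
    rw [← finsum_eq_sum_of_fintype]
    exact finsum_congr (fun S => finsum_eq_if)
  rw [hfin]
  -- Step 2 : the order isomorphism with the submodule lattice
  let emb : {H : AddSubgroup (Fin k → ZMod p) // H ≠ ⊥ ∧ H ≠ ⊤}
      ↪ Submodule (ZMod p) (Fin k → ZMod p) :=
    ⟨fun a => e a.1, fun a b h => Subtype.ext (e.injective h)⟩
  have hebot : ∀ (H : AddSubgroup (Fin k → ZMod p)), e H = ⊥ ↔ H = ⊥ := by
    intro H
    constructor
    · intro h
      have := congrArg e.symm h
      rwa [e.symm_apply_apply, map_bot] at this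
    · rintro rfl; exact map_bot e
  have hetop : ∀ (H : AddSubgroup (Fin k → ZMod p)), e H = ⊤ ↔ H = ⊤ := by
    intro H
    constructor
    · intro h
      have := congrArg e.symm h
      rwa [e.symm_apply_apply, map_top] at this
    · rintro rfl; exact map_top e
  have hbij : ∑ S ∈ univ.filter
        (fun S : Finset {H : AddSubgroup (Fin k → ZMod p) // H ≠ ⊥ ∧ H ≠ ⊤}
          => S.Nonempty ∧ IsChain (· ≤ ·)
            (S : Set {H : AddSubgroup (Fin k → ZMod p) // H ≠ ⊥ ∧ H ≠ ⊤})),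
        (-1 : ℤ) ^ (S.card - 1)
      = ∑ T ∈ (chainsBelow (⊤ : Submodule (ZMod p) (Fin k → ZMod p))).erase ∅,
          (-1 : ℤ) ^ (T.card - 1) := by
    refine Finset.sum_bij' (fun S _ => S.map emb)
      (fun T hT => T.attach.map
        ⟨fun x => (⟨e.symm x.1, by
            have hx := x.2
            rw [Finset.mem_erase] at hT
            have hT2 := hT.2
            simp only [chainsBelow, mem_filter, mem_univ, true_and] at hT2
            have hcond := hT2.1 x.1 hx
            constructor
            · intro hcon
              have : (x : Submodule (ZMod p) (Fin k → ZMod p)) = ⊥ := by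
                have := congrArg e hcon
                rwa [e.apply_symm_apply, map_bot] at this
              exact absurd this (ne_of_gt hcond.1)
            · intro hcon
              have : (x : Submodule (ZMod p) (Fin k → ZMod p)) = ⊤ := by
                have := congrArg e hcon
                rwa [e.apply_symm_apply, map_top] at this
              exact absurd this (ne_of_lt hcond.2)⟩ :
          {H : AddSubgroup (Fin k → ZMod p) // H ≠ ⊥ ∧ H ≠ ⊤}),
         fun a b hab => Subtype.ext (by
            have h1 : e.symm a.1 = e.symm b.1 := congrArg Subtype.val hab
            exact e.symm.injective h1)⟩)
      ?_ ?_ ?_ ?_ ?_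
    · -- forward lands in target
      intro S hS
      rw [mem_filter] at hS
      obtain ⟨-, hne, hchain⟩ := hS
      rw [Finset.mem_erase]
      constructor
      · exact Finset.nonempty_iff_ne_empty.mp (Finset.map_nonempty.mpr hne)
      · simp only [chainsBelow, mem_filter, mem_univ, true_and]
        constructor
        · intro y hy
          obtain ⟨a, ha, rfl⟩ := Finset.mem_map.mp hy
          constructor
          · exact bot_lt_iff_ne_bot.mpr (fun hcon => a.2.1 ((hebot a.1).mp hcon))
          · exact lt_top_iff_ne_top.mpr (fun hcon => a.2.2 ((hetop a.1).mp hcon))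
        · rw [Finset.coe_map]
          refine IsChain.image_of_map_rel _ _ _ ?_ hchain
          intro x y hxy
          exact e.monotone hxy
    · -- backward lands in source
      intro T hT
      rw [mem_filter]
      refine ⟨mem_univ _, ?_, ?_⟩
      · rw [Finset.mem_erase] at hT
        have : T.Nonempty := Finset.nonempty_iff_ne_empty.mpr hT.1
        obtain ⟨t, ht⟩ := this
        exact ⟨_, Finset.mem_map_of_mem _ (Finset.mem_attach T ⟨t, ht⟩)⟩
      · intro a ha b hb hne
        simp only [Finset.coe_map, Set.mem_image, Finset.mem_coe, Finset.mem_map] at ha hb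
        obtain ⟨x, -, rfl⟩ := ha
        obtain ⟨y, -, rfl⟩ := hb
        rw [Finset.mem_erase] at hT
        have hT2 := hT.2
        simp only [chainsBelow, mem_filter, mem_univ, true_and] at hT2
        have hchain := hT2.2
        have hxy : (x : Submodule (ZMod p) (Fin k → ZMod p)) ≠ (y : _) := by
          intro hcon
          apply hne
          exact Subtype.ext (congrArg e.symm hcon)
        rcases hchain x.2 y.2 hxy with h | h
        · exact Or.inl (e.symm.monotone h)
        · exact Or.inr (e.symm.monotone h)
    · -- left inverse
      intro S hS
      apply Finset.map_injective emb
      ext z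
      constructor
      · intro h
        obtain ⟨a, ha, rfl⟩ := Finset.mem_map.mp h
        obtain ⟨x, -, rfl⟩ := Finset.mem_map.mp ha
        show e (e.symm (x.1)) ∈ S.map emb
        rw [e.apply_symm_apply]
        exact x.2
      · intro hz
        refine Finset.mem_map.mpr ⟨_, Finset.mem_map_of_mem _ (Finset.mem_attach _ ⟨z, hz⟩), ?_⟩
        show e (e.symm z) = z
        exact e.apply_symm_apply z
    · -- right inverse
      intro T hT
      ext z
      constructor
      · intro h
        obtain ⟨a, ha, rfl⟩ := Finset.mem_map.mp h
        obtain ⟨x, -, rfl⟩ := Finset.mem_map.mp ha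
        show e (e.symm (x.1)) ∈ T
        rw [e.apply_symm_apply]
        exact x.2
      · intro hz
        refine Finset.mem_map.mpr ⟨_, Finset.mem_map_of_mem _ (Finset.mem_attach _ ⟨z, hz⟩), ?_⟩
        show e (e.symm z) = z
        exact e.apply_symm_apply z
    · -- values agree
      intro S hS
      rw [Finset.card_map]
  rw [hbij]
  -- Step 3 : evaluate via the Möbius computation
  have htopne : (⊤ : Submodule (ZMod p) (Fin k → ZMod p)) ≠ ⊥ := by
    intro hcon
    have h1 : (1 : ZMod p) ≠ 0 := one_ne_zero
    have : ((fun _ => 1 : Fin k → ZMod p)) ∈ (⊥ : Submodule (ZMod p) (Fin k → ZMod p)) := by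
      rw [← hcon]; trivial
    rw [Submodule.mem_bot] at this
    exact h1 (congrFun this ⟨0, hkpos⟩)
  have hmu := mu_eq_tgt (⊤ : Submodule (ZMod p) (Fin k → ZMod p))
  rw [mu, if_neg htopne] at hmu
  have hrank : finrank (ZMod p) (⊤ : Submodule (ZMod p) (Fin k → ZMod p)) = k := by
    rw [finrank_top, Module.finrank_fin_fun]
  rw [hrank, tgt] at hmu
  -- chainSum ⊤ in terms of the sum over nonempty chains
  have h0 : (∅ : Finset (Submodule (ZMod p) (Fin k → ZMod p)))
      ∈ chainsBelow (⊤ : Submodule (ZMod p) (Fin k → ZMod p)) := by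
    simp [chainsBelow]
  have hkey := Finset.add_sum_erase _ (fun T : Finset (Submodule (ZMod p) (Fin k → ZMod p))
    => (-1 : ℤ) ^ T.card) h0
  have hCS : chainSum (⊤ : Submodule (ZMod p) (Fin k → ZMod p))
      = 1 + ∑ T ∈ (chainsBelow (⊤ : Submodule (ZMod p) (Fin k → ZMod p))).erase ∅,
          (-1 : ℤ) ^ T.card := by
    rw [chainSum, ← hkey]
    simp
  have hptw : ∀ T ∈ (chainsBelow (⊤ : Submodule (ZMod p) (Fin k → ZMod p))).erase ∅,
      (-1 : ℤ) ^ (T.card - 1) = -((-1 : ℤ) ^ T.card) := by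
    intro T hT
    have hne : T ≠ ∅ := Finset.ne_of_mem_erase hT
    have : 1 ≤ T.card := Finset.card_pos.mpr (Finset.nonempty_iff_ne_empty.mpr hne)
    exact neg_one_pow_pred this
  rw [Finset.sum_congr rfl hptw, Finset.sum_neg_distrib]
  have hchoose : k.choose 2 = k * (k - 1) / 2 := Nat.choose_two_right k
  rw [← hchoose]
  -- now: -(∑ (-1)^card) - 1 = (-1)^k * p^(choose k 2)
  -- hmu : -chainSum ⊤ = (-1)^k * p^(choose k 2)
  -- hCS : chainSum ⊤ = 1 + ∑ (-1)^card
  linarith [hmu, hCS]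
end
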